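/- Let k ≥ 2 be an integer and let H be a connected graph of order n. If H contains a clique on at least n − k + 1 vertices, then H has a spanning k-ended-tree (a spanning tree with at most k leaves). -/

import Mathlib

set_option maxHeartbeats 1000000


open Finset
open scoped Classical

/-- The adjacency matrix of a simple graph over ℝ. -/
noncomputable def adjMat {V : Type*} [Fintype V] (G : SimpleGraph V) :
    Matrix V V ℝ := fun i j => if G.Adj i j then 1 else 0

/-- The spectral radius of a graph: the largest (real) eigenvalue of its
adjacency matrix. -/
noncomputable def specRad {V : Type*} [Fintype V] (G : SimpleGraph V) : ℝ :=
  sSup {μ : ℝ | Module.End.HasEigenvalue (Matrix.mulVecLin (adjMat G)) μ}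

/-- The signless Laplacian matrix `Q = D + A` of a simple graph. -/
noncomputable def qMat {V : Type*} [Fintype V] (G : SimpleGraph V) :
    Matrix V V ℝ := fun i j =>
  (if i = j then ((univ.filter fun u => G.Adj i u).card : ℝ) else 0) +
    (if G.Adj i j then 1 else 0)

/-- The signless Laplacian spectral radius of a graph: the largest (real)
eigenvalue of `Q = D + A`. -/
noncomputable def qRad {V : Type*} [Fintype V] (G : SimpleGraph V) : ℝ :=
  sSup {μ : ℝ | Module.End.HasEigenvalue (Matrix.mulVecLin (qMat G)) μ}

/-- `G` has a spanning `k`-ended-tree: a spanning tree with at most `k`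
leaves (vertices of degree 1 in the tree). -/
noncomputable def HasSpanningKEndedTree {V : Type*} [Fintype V]
    (G : SimpleGraph V) (k : ℕ) : Prop :=
  ∃ T : SimpleGraph V, T ≤ G ∧ T.IsTree ∧
    (univ.filter fun v => T.degree v = 1).card ≤ k

/-- `G` has a spanning tree with leaf degree at most `k`: every vertex of the
tree is adjacent (in the tree) to at most `k` leaves of the tree. -/
noncomputable def HasSpanningTreeLeafDegLE {V : Type*} [Fintype V]
    (G : SimpleGraph V) (k : ℕ) : Prop :=
  ∃ T : SimpleGraph V, T ≤ G ∧ T.IsTree ∧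
    ∀ v, (univ.filter fun u => T.Adj v u ∧ T.degree u = 1).card ≤ k

/-- The graph `K₁ ∨ (K_{n-k-1} + kK₁)` on `n` vertices: vertex `0` is joined to
everything, vertices `0, …, n-k-1` form a clique `K_{n-k}`, and the last `k`
vertices are only adjacent to vertex `0`. -/
def oneJoinCliquePlusIso (n k : ℕ) : SimpleGraph (Fin n) :=
  SimpleGraph.fromRel fun i j => i.val = 0 ∨ (i.val < n - k ∧ j.val < n - k)

section Aux

/-- Crossing lemma: a walk from inside `D` to outside `D` uses an edge
crossing the boundary of `D`. -/
lemma aux_walk_cross {V : Type*} {G : SimpleGraph V} (D : V → Prop) :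
    ∀ {a b : V} (w : G.Walk a b), D a → ¬ D b →
      ∃ u v, D u ∧ ¬ D v ∧ s(u, v) ∈ w.edges := by
  intro a b w
  induction w with
  | nil => intro h h'; exact absurd h h'
  | @cons a c b h q ih =>
      intro ha hb
      by_cases hc : D c
      · obtain ⟨u, v, h1, h2, h3⟩ := ih hc hb
        exact ⟨u, v, h1, h2, List.mem_cons_of_mem _ h3⟩
      · exact ⟨a, c, ha, hc, by simp⟩

/-- A parent function whose iterates all reach the root `r` determines a
spanning tree; a vertex different from the root that has a child is not a
leaf of that tree. -/
lemma aux_parent_tree {n : ℕ} (H : SimpleGraph (Fin n)) (p : Fin n → Fin n) (r : Fin n)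
    (hpr : p r = r)
    (hadj : ∀ v, v ≠ r → H.Adj v (p v))
    (hreach : ∀ v, ∃ j, p^[j] v = r) :
    ∃ T : SimpleGraph (Fin n), T ≤ H ∧ T.IsTree ∧
      ∀ v u, v ≠ r → u ≠ r → p u = v → T.degree v ≠ 1 := by
  classical
  set T : SimpleGraph (Fin n) :=
    SimpleGraph.fromRel (fun a b => a ≠ r ∧ p a = b) with hT
  have hadj_iff : ∀ a b, T.Adj a b ↔
      a ≠ b ∧ ((a ≠ r ∧ p a = b) ∨ (b ≠ r ∧ p b = a)) := by
    intro a b; rw [hT, SimpleGraph.fromRel_adj]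
  have hstick : ∀ j, p^[j] r = r := by
    intro j
    induction j with
    | zero => rfl
    | succ j ih => rw [Function.iterate_succ_apply', ih, hpr]
  -- no nontrivial periodic points away from the root
  have hper : ∀ x t, x ≠ r → 0 < t → p^[t] x = x → False := by
    intro x t hx ht hcyc
    obtain ⟨j, hj⟩ := hreach x
    have hmul : ∀ c, p^[c * t] x = x := by
      intro c
      induction c with
      | zero => simp
      | succ c ih =>
          have : (c + 1) * t = c * t + t := by ring
          rw [this, Function.iterate_add_apply, hcyc, ih]
    have hjt : j ≤ j * t := Nat.le_mul_of_pos_right j ht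
    have : x = r := by
      have h1 : p^[j * t] x = x := hmul j
      have h2 : j * t = (j * t - j) + j := by omega
      rw [h2, Function.iterate_add_apply, hj, hstick] at h1
      exact h1.symm
    exact hx this
  -- T ≤ H
  have hle : T ≤ H := by
    intro a b hab
    rcases (hadj_iff a b).mp hab with ⟨hne, h | h⟩
    · rw [← h.2]; exact hadj a h.1
    · rw [← h.2]; exact (hadj b h.1).symm
  -- connectivity
  have hTadj : ∀ v, v ≠ r → T.Adj v (p v) := by
    intro v hv
    exact (hadj_iff v (p v)).mpr ⟨(hadj v hv).ne, Or.inl ⟨hv, rfl⟩⟩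
  have hwalk : ∀ v, T.Reachable v r := by
    intro v
    obtain ⟨j, hj⟩ := hreach v
    induction j generalizing v with
    | zero => rw [show v = r from hj]
    | succ j ih =>
        by_cases hv : v = r
        · rw [hv]
        · refine (hTadj v hv).reachable.trans (ih (p v) ?_)
          rwa [Function.iterate_succ_apply] at hj
  have hconn : T.Connected := by
    have : Nonempty (Fin n) := ⟨r⟩
    exact SimpleGraph.Connected.mk fun a b => (hwalk a).trans (hwalk b).symm
  -- every edge is a bridge
  have hbridge : ∀ x, x ≠ r → T.IsBridge s(x, p x) := by
    intro x hx
    rw [SimpleGraph.isBridge_iff_adj_and_forall_walk_mem_edges]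
    intro w
    set D : Fin n → Prop := fun z => ∃ j, p^[j] z = x with hD
    have hxD : D x := ⟨0, rfl⟩
    have hpxD : ¬ D (p x) := by
      rintro ⟨j, hj⟩
      refine hper x (j + 1) hx (Nat.succ_pos j) ?_
      rwa [Function.iterate_succ_apply]
    obtain ⟨u, v, hu, hv, hmem⟩ := aux_walk_cross D w hxD hpxD
    have hTuv : T.Adj u v := w.adj_of_mem_edges hmem
    rcases (hadj_iff u v).mp hTuv with ⟨hne, h | h⟩
    · -- p u = v
      obtain ⟨j, hj⟩ := hu
      rcases Nat.eq_zero_or_pos j with hj0 | hj0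
      · subst hj0
        have hux : u = x := hj
        have hvpx : v = p x := by rw [← h.2, hux]
        rw [hux, hvpx] at hmem; exact hmem
      · exfalso
        apply hv
        refine ⟨j - 1, ?_⟩
        have : j = (j - 1) + 1 := by omega
        rw [this, Function.iterate_succ_apply, h.2] at hj
        exact hj
    · -- p v = u
      exfalso
      apply hv
      obtain ⟨j, hj⟩ := hu
      exact ⟨j + 1, by rw [Function.iterate_succ_apply, h.2]; exact hj⟩
  have hacyc : T.IsAcyclic := by
    rw [SimpleGraph.isAcyclic_iff_forall_adj_isBridge]
    intro a b hab
    rcases (hadj_iff a b).mp hab with ⟨hne, h | h⟩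
    · rw [← h.2]; exact hbridge a h.1
    · rw [Sym2.eq_swap, ← h.2]; exact hbridge b h.1
  refine ⟨T, hle, ⟨hconn, hacyc⟩, ?_⟩
  -- degree condition
  intro v u hv hu hpu hdeg
  have hvu : v ≠ u := by
    intro h
    exact hper u 1 hu one_pos (by simpa using h ▸ hpu)
  have hpvu : p v ≠ u := by
    intro h
    refine hper v 2 hv (by norm_num) ?_
    show p (p^[1] v) = v
    rw [Function.iterate_one, h, hpu]
  have hsub : ({p v, u} : Finset (Fin n)) ⊆ T.neighborFinset v := by
    intro z hz
    rcases Finset.mem_insert.mp hz with hz | hz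
    · subst hz; rw [SimpleGraph.mem_neighborFinset]; exact hTadj v hv
    · rw [Finset.mem_singleton] at hz
      rw [SimpleGraph.mem_neighborFinset, hz]
      exact (hadj_iff v u).mpr ⟨hvu, Or.inr ⟨hu, hpu⟩⟩
  have h2 : 2 ≤ (T.neighborFinset v).card := by
    calc 2 = ({p v, u} : Finset (Fin n)).card := (Finset.card_pair hpvu).symm
    _ ≤ (T.neighborFinset v).card := Finset.card_le_card hsub
  have : T.degree v = (T.neighborFinset v).card := rfl
  have h3 : T.degree v = 1 := by convert hdeg
  omega

/-- In a connected graph, any vertex `v ≠ w` has a neighbour closer to `w`. -/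
lemma aux_exists_desc {n : ℕ} (H : SimpleGraph (Fin n)) (hH : H.Connected)
    (w v : Fin n) (hv : v ≠ w) :
    ∃ u, H.Adj v u ∧ H.dist u w < H.dist v w := by
  obtain ⟨q, hq⟩ := (hH v w).exists_walk_length_eq_dist
  cases q with
  | nil => exact absurd rfl hv
  | @cons _ c _ h q' =>
      refine ⟨c, h, ?_⟩
      have h1 : H.dist c w ≤ q'.length := SimpleGraph.dist_le q'
      have h2 : (SimpleGraph.Walk.cons h q').length = q'.length + 1 := by simp
      omega

/-- A boundary edge exists along a walk from outside a set into the set. -/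
lemma aux_boundary {V : Type*} {H : SimpleGraph V} (s : Finset V) :
    ∀ {y x : V}, H.Walk y x → x ∈ s → y ∉ s →
      ∃ a ∈ s, ∃ b, b ∉ s ∧ H.Adj b a := by
  intro y x w
  induction w with
  | nil => intro hx hy; exact absurd hx hy
  | @cons u c _ h q ih =>
      intro hx hu
      by_cases hc : c ∈ s
      · exact ⟨c, hc, u, hu, h⟩
      · exact ih hx hc

/-- The main construction: a Hamiltonian path on the clique `s` (via the
enumeration `e`), with all other vertices attached by BFS towards `e 0`. -/
lemma aux_build {n m : ℕ} (hm : 2 ≤ m) (H : SimpleGraph (Fin n)) (hH : H.Connected)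
    (s : Finset (Fin n)) (hs : H.IsClique ↑s) (e : Fin m ≃ {x // x ∈ s}) :
    ∃ T : SimpleGraph (Fin n), T ≤ H ∧ T.IsTree ∧
      ∀ v, T.degree v = 1 →
        v = (e ⟨m - 1, by omega⟩ : Fin n) ∨ v ∉ s ∨
          (v = (e ⟨0, by omega⟩ : Fin n) ∧ ∀ u, u ∉ s → ¬ H.Adj u v) := by
  classical
  have hm0 : 0 < m := by omega
  set b0 : Fin n := (e ⟨0, hm0⟩ : Fin n) with hb0
  set root : Fin n := (e ⟨m - 1, by omega⟩ : Fin n) with hroot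
  have hb0s : b0 ∈ s := (e ⟨0, hm0⟩).2
  have hroots : root ∈ s := (e ⟨m - 1, by omega⟩).2
  have hdesc : ∀ v : Fin n, v ∉ s →
      ∃ u, H.Adj v u ∧ H.dist u b0 < H.dist v b0 := by
    intro v hv
    exact aux_exists_desc H hH b0 v (fun h => hv (h ▸ hb0s))
  set p : Fin n → Fin n := fun v =>
    if hv : v ∈ s then
      (if _h : ((e.symm ⟨v, hv⟩ : Fin m) : ℕ) < m - 1 then
        (e ⟨((e.symm ⟨v, hv⟩ : Fin m) : ℕ) + 1, by omega⟩ : Fin n) else v)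
    else Classical.choose (hdesc v hv) with hp
  have hmem : ∀ i : Fin m, ((e i : {x // x ∈ s}) : Fin n) ∈ s := fun i => (e i).2
  have hcoe_inj : ∀ i j : Fin m, ((e i : {x // x ∈ s}) : Fin n) = (e j : Fin n) → i = j := by
    intro i j hij
    exact e.injective (Subtype.ext hij)
  have hpe : ∀ i : Fin m, p (e i : Fin n) =
      if h : (i : ℕ) < m - 1 then (e ⟨(i : ℕ) + 1, by omega⟩ : Fin n)
      else (e i : Fin n) := by
    intro i
    have hv : ((e i : {x // x ∈ s}) : Fin n) ∈ s := hmem i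
    have hsy : (e.symm ⟨((e i : {x // x ∈ s}) : Fin n), hv⟩ : Fin m) = i := by
      rw [Subtype.coe_eta]; exact e.symm_apply_apply i
    rw [hp]
    simp only [dif_pos hv, hsy]
  have hpneg : ∀ v (hv : v ∉ s), p v = Classical.choose (hdesc v hv) := by
    intro v hv
    rw [hp]; simp only [dif_neg hv]
  -- p fixes the root
  have hproot : p root = root := by
    rw [hroot, hpe]
    simp
  -- adjacency along p
  have hadje : ∀ i j : Fin m, i ≠ j → H.Adj (e i : Fin n) (e j : Fin n) := by
    intro i j hij
    refine hs (Finset.mem_coe.mpr (hmem i)) (Finset.mem_coe.mpr (hmem j)) ?_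
    intro h
    exact hij (hcoe_inj i j h)
  have hadj : ∀ v, v ≠ root → H.Adj v (p v) := by
    intro v hv
    by_cases hvs : v ∈ s
    · set i : Fin m := e.symm ⟨v, hvs⟩ with hi
      have hvi : v = (e i : Fin n) := by
        rw [hi, e.apply_symm_apply]
      have hilt : (i : ℕ) < m - 1 := by
        have hlt := i.isLt
        have : (i : ℕ) ≤ m - 1 := by omega
        rcases lt_or_eq_of_le this with h | h
        · exact h
        · exfalso
          apply hv
          have hieq : i = (⟨m - 1, by omega⟩ : Fin m) := Fin.ext h
          rw [hvi, hroot, hieq]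
      rw [hvi, hpe]
      simp only [dif_pos hilt]
      refine hadje i ⟨(i : ℕ) + 1, by omega⟩ ?_
      intro h
      have := congrArg Fin.val h
      simp at this
    · rw [hpneg v hvs]
      exact (Classical.choose_spec (hdesc v hvs)).1
  -- reachability to the root
  have hSe : ∀ t (i : Fin m), m - 1 ≤ (i : ℕ) + t → p^[t] (e i : Fin n) = root := by
    intro t
    induction t with
    | zero =>
        intro i hi
        have hlt := i.isLt
        have : (i : ℕ) = m - 1 := by omega
        have hieq : i = (⟨m - 1, by omega⟩ : Fin m) := Fin.ext this
        show (e i : Fin n) = root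
        rw [hroot, hieq]
    | succ t ih =>
        intro i hi
        rw [Function.iterate_succ_apply, hpe]
        split_ifs with h
        · exact ih ⟨(i : ℕ) + 1, by omega⟩ (by simp only [Fin.val_mk]; omega)
        · exact ih i (by omega)
  have hS : ∀ v, v ∈ s → ∃ j, p^[j] v = root := by
    intro v hv
    refine ⟨m - 1, ?_⟩
    have hvi : v = (e (e.symm ⟨v, hv⟩) : Fin n) := by rw [e.apply_symm_apply]
    rw [hvi]
    exact hSe (m - 1) _ (by omega)
  have hkey : ∀ d v, H.dist v b0 ≤ d → ∃ j, p^[j] v = root := by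
    intro d
    induction d with
    | zero =>
        intro v h0
        have : v = b0 := hH.dist_eq_zero_iff.mp (Nat.le_zero.mp h0)
        exact hS v (this ▸ hb0s)
    | succ d ih =>
        intro v hvd
        by_cases hv : v ∈ s
        · exact hS v hv
        · have hspec := Classical.choose_spec (hdesc v hv)
          obtain ⟨j, hj⟩ := ih (Classical.choose (hdesc v hv)) (by omega)
          refine ⟨j + 1, ?_⟩
          rw [Function.iterate_succ_apply, hpneg v hv]
          exact hj
  have hreach : ∀ v, ∃ j, p^[j] v = root := fun v => hkey (H.dist v b0) v le_rfl
  obtain ⟨T, hle, htree, hdeg⟩ := aux_parent_tree H p root hproot hadj hreach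
  refine ⟨T, hle, htree, ?_⟩
  intro v hdeg1
  by_cases hvr : v = root
  · exact Or.inl hvr
  by_cases hvs : v ∈ s
  · right
    obtain ⟨i, rfl⟩ : ∃ i : Fin m, v = (e i : Fin n) :=
      ⟨e.symm ⟨v, hvs⟩, by rw [e.apply_symm_apply]⟩
    have hine : (i : ℕ) ≠ m - 1 := by
      intro h
      apply hvr
      have hieq : i = (⟨m - 1, by omega⟩ : Fin m) := Fin.ext h
      rw [hroot, hieq]
    have hilt : (i : ℕ) < m - 1 := by
      have hlt := i.isLt
      omega
    rcases Nat.eq_zero_or_pos (i : ℕ) with hi0 | hi0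
    · -- v = b0
      have hieq : i = (⟨0, hm0⟩ : Fin m) := Fin.ext hi0
      right
      constructor
      · rw [hieq]
      · intro u hu huv
        have hub0 : H.Adj u b0 := by
          rw [hb0, ← hieq]
          exact huv
        have hspec := Classical.choose_spec (hdesc u hu)
        have hd1 : H.dist u b0 ≤ 1 := by
          have := SimpleGraph.dist_le (hub0.toWalk)
          simpa using this
        have hd0 : H.dist (Classical.choose (hdesc u hu)) b0 = 0 := by omega
        have hpu : p u = (e i : Fin n) := by
          rw [hpneg u hu, hieq, ← hb0]
          exact hH.dist_eq_zero_iff.mp hd0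
        refine absurd hdeg1 (hdeg _ u hvr ?_ hpu)
        intro h
        exact hu (h ▸ hroots)
    · -- v has a child e ⟨i-1⟩
      exfalso
      have h1 : ((⟨(i : ℕ) - 1, by omega⟩ : Fin m) : ℕ) < m - 1 := by
        simp only [Fin.val_mk]
        omega
      have hpu : p ((e ⟨(i : ℕ) - 1, by omega⟩ : { x // x ∈ s }) : Fin n) = (e i : Fin n) := by
        rw [hpe]
        rw [dif_pos h1]
        have h2 : (⟨((⟨(i : ℕ) - 1, by omega⟩ : Fin m) : ℕ) + 1, by omega⟩ : Fin m) = i := by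
          apply Fin.ext
          simp only [Fin.val_mk]
          omega
        rw [h2]
      have hune : ((e ⟨(i : ℕ) - 1, by omega⟩ : { x // x ∈ s }) : Fin n) ≠ root := by
        rw [hroot]
        intro h
        have h3 := congrArg Fin.val (hcoe_inj _ _ h)
        simp only [Fin.val_mk] at h3
        omega
      exact hdeg _ _ hvr hune hpu hdeg1
  · exact Or.inr (Or.inl hvs)

end Aux

/-- **Lemma.**  Let `k ≥ 2` and let `H` be a connected graph of order `n`
containing a clique on at least `n - k + 1` vertices.  Then `H` has a spanning
`k`-ended-tree. -/
theorem clique_spanning_k_ended_tree {n k : ℕ} (hk : 2 ≤ k)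
    (H : SimpleGraph (Fin n)) (hH : H.Connected)
    (s : Finset (Fin n)) (hs : H.IsClique ↑s)
    (hcard : (n : ℤ) - (k : ℤ) + 1 ≤ (s.card : ℤ)) :
    HasSpanningKEndedTree H k := by
  classical
  have hnn : Nonempty (Fin n) := hH.nonempty
  have hn : 0 < n := Fin.pos hnn.some
  have hsn : s.card ≤ n := by
    have := s.card_le_univ
    simpa using this
  by_cases hm : 2 ≤ s.card
  · by_cases hall : ∀ x : Fin n, x ∈ s
    · -- s = univ : Hamiltonian path suffices
      set e : Fin s.card ≃ {x // x ∈ s} := s.equivFin.symm with he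
      obtain ⟨T, hle, htree, hclass⟩ := aux_build hm H hH s hs e
      refine ⟨T, hle, htree, ?_⟩
      have hsub : (univ.filter fun v => T.degree v = 1) ⊆
          {(e ⟨s.card - 1, by omega⟩ : Fin n), (e ⟨0, by omega⟩ : Fin n)} := by
        intro v hv
        rw [Finset.mem_filter] at hv
        rcases hclass v hv.2 with h | h | h
        · simp [h]
        · exact absurd (hall v) h
        · simp [h.1]
      calc (univ.filter fun v => T.degree v = 1).card
          ≤ ({(e ⟨s.card - 1, by omega⟩ : Fin n), (e ⟨0, by omega⟩ : Fin n)} :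
              Finset (Fin n)).card := Finset.card_le_card hsub
        _ ≤ 2 := Finset.card_insert_le _ _ |>.trans (by simp)
        _ ≤ k := hk
    · -- there is a vertex outside s
      push_neg at hall
      obtain ⟨y, hy⟩ := hall
      obtain ⟨x, hx⟩ := Finset.card_pos.mp (show 0 < s.card by omega)
      obtain ⟨w⟩ := hH.preconnected y x
      obtain ⟨a', ha's, r', hr's, hadj'⟩ := aux_boundary s w hx hy
      set e0 : Fin s.card ≃ {x // x ∈ s} := s.equivFin.symm with he0
      set i0 : Fin s.card := e0.symm ⟨a', ha's⟩ with hi0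
      set e : Fin s.card ≃ {x // x ∈ s} :=
        (Equiv.swap (⟨0, by omega⟩ : Fin s.card) i0).trans e0 with he
      have hb0 : (e ⟨0, by omega⟩ : Fin n) = a' := by
        rw [he]
        simp only [Equiv.trans_apply, Equiv.swap_apply_left, hi0]
        rw [e0.apply_symm_apply]
      obtain ⟨T, hle, htree, hclass⟩ := aux_build hm H hH s hs e
      refine ⟨T, hle, htree, ?_⟩
      have hsub : (univ.filter fun v => T.degree v = 1) ⊆
          insert (e ⟨s.card - 1, by omega⟩ : Fin n) (univ \ s) := by
        intro v hv
        rw [Finset.mem_filter] at hv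
        rcases hclass v hv.2 with h | h | h
        · rw [h]; exact Finset.mem_insert_self _ _
        · exact Finset.mem_insert_of_mem (Finset.mem_sdiff.mpr ⟨Finset.mem_univ v, h⟩)
        · exfalso
          exact h.2 r' hr's (by rw [h.1, hb0]; exact hadj')
      have hcard2 : (univ \ s).card = n - s.card := by
        rw [Finset.card_sdiff_of_subset (Finset.subset_univ s)]
        simp
      calc (univ.filter fun v => T.degree v = 1).card
          ≤ (insert (e ⟨s.card - 1, by omega⟩ : Fin n) (univ \ s)).card :=
            Finset.card_le_card hsub
        _ ≤ (univ \ s).card + 1 := Finset.card_insert_le _ _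
        _ ≤ k := by rw [hcard2]; omega
  · -- small case : n ≤ k, any spanning tree works
    have hnk : n ≤ k := by omega
    set r : Fin n := ⟨0, hn⟩ with hr
    have hdesc : ∀ v : Fin n, v ≠ r → ∃ u, H.Adj v u ∧ H.dist u r < H.dist v r :=
      fun v hv => aux_exists_desc H hH r v hv
    set p : Fin n → Fin n := fun v =>
      if hv : v = r then v else Classical.choose (hdesc v hv) with hp
    have hpr : p r = r := by rw [hp]; simp
    have hpneg : ∀ v (hv : v ≠ r), p v = Classical.choose (hdesc v hv) := by
      intro v hv; rw [hp]; simp only [dif_neg hv]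
    have hadj : ∀ v, v ≠ r → H.Adj v (p v) := by
      intro v hv
      rw [hpneg v hv]
      exact (Classical.choose_spec (hdesc v hv)).1
    have hkey : ∀ d v, H.dist v r ≤ d → ∃ j, p^[j] v = r := by
      intro d
      induction d with
      | zero =>
          intro v h0
          exact ⟨0, hH.dist_eq_zero_iff.mp (Nat.le_zero.mp h0)⟩
      | succ d ih =>
          intro v hvd
          by_cases hv : v = r
          · exact ⟨0, hv⟩
          · have hspec := Classical.choose_spec (hdesc v hv)
            obtain ⟨j, hj⟩ := ih (Classical.choose (hdesc v hv)) (by omega)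
            refine ⟨j + 1, ?_⟩
            rw [Function.iterate_succ_apply, hpneg v hv]
            exact hj
    obtain ⟨T, hle, htree, _⟩ := aux_parent_tree H p r hpr hadj
      (fun v => hkey (H.dist v r) v le_rfl)
    refine ⟨T, hle, htree, ?_⟩
    calc (univ.filter fun v => T.degree v = 1).card
        ≤ (univ : Finset (Fin n)).card := Finset.card_filter_le _ _
      _ = n := by simp
      _ ≤ k := hnk
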